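/- Let {x_k} be a system with biorthogonal system {x_k*}, let ℕ = N1 ⊔ N2 be a partition, and let k0 ∈ N2. If the orthogonal complement of the closed linear span of {x_k}_{k∈N1} ∪ {x_k*}_{k∈N2} has dimension m (possibly infinite), then the orthogonal complement of the closed linear span of {x_k}_{k∈N1∪{k0}} ∪ {x_k*}_{k∈N2∖{k0}} also has dimension m. -/

import Mathlib

open Filter Topology

noncomputable section

variable {H : Type*} [NormedAddCommGroup H] [InnerProductSpace ℂ H] [CompleteSpace H]

/-- Closed linear span of a set of vectors. -/
def clSpan (s : Set H) : Submodule ℂ H := (Submodule.span ℂ s).topologicalClosure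

instance (s : Set H) : CompleteSpace (clSpan s) :=
  (Submodule.isClosed_topologicalClosure _).completeSpace_coe

/-- Orthogonal projection onto the closed linear span of `s`, as a map `H → H`. -/
def projS (s : Set H) : H →L[ℂ] H :=
  (clSpan s).subtypeL ∘L (clSpan s).orthogonalProjectionOnto

/-- The system `x` is complete: its closed linear span is all of `H`. -/
def IsCompleteSystem (x : ℕ → H) : Prop := clSpan (Set.range x) = ⊤

/-- The system `x` is minimal: no vector lies in the closed span of the others. -/
def IsMinimalSystem (x : ℕ → H) : Prop :=
  ∀ k, x k ∉ clSpan (x '' {j | j ≠ k})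

/-- `y` is biorthogonal to `x`. -/
def IsBiorthogonal (x y : ℕ → H) : Prop :=
  ∀ k j, (inner ℂ (x k) (y j) : ℂ) = if k = j then 1 else 0

lemma clSpan_orthogonal (s : Set H) : (clSpan s)ᗮ = (Submodule.span ℂ s)ᗮ := by
  unfold clSpan
  rw [← Submodule.orthogonal_orthogonal_eq_closure, Submodule.triorthogonal_eq_orthogonal]

lemma mem_clSpan_orthogonal {s : Set H} {z : H} (h : ∀ u ∈ s, (inner ℂ u z : ℂ) = 0) :
    z ∈ (clSpan s)ᗮ := by
  rw [clSpan_orthogonal, Submodule.mem_orthogonal]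
  intro u hu
  induction hu using Submodule.span_induction with
  | mem u hu => exact h u hu
  | zero => simp
  | add a b _ _ ha hb => rw [inner_add_left, ha, hb, add_zero]
  | smul c a _ ha => rw [inner_smul_left, ha, mul_zero]

/-- If `t ⊥ clSpan s`, any element of the closed span of `s ∪ t` that is orthogonal to
`clSpan s` lies in `clSpan t`. -/
lemma mem_clSpan_right {s t : Set H} (hts : t ⊆ ((clSpan s)ᗮ : Set H)) {a : H}
    (ha : a ∈ clSpan (s ∪ t)) (ha' : a ∈ (clSpan s)ᗮ) : a ∈ clSpan t := by
  have hcont : Continuous fun z : H => z - projS s z :=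
    continuous_id.sub (projS s).continuous
  have hmem : a ∈ closure ((Submodule.span ℂ (s ∪ t) : Set H)) := ha
  have hmaps : Set.MapsTo (fun z : H => z - projS s z)
      (Submodule.span ℂ (s ∪ t) : Set H) (clSpan t : Set H) := by
    intro b hb
    have hb' : b ∈ Submodule.span ℂ (s ∪ t) := hb
    rw [Submodule.span_union, Submodule.mem_sup] at hb'
    obtain ⟨c, hc, d, hd, rfl⟩ := hb'
    have hc' : projS s c = c := by
      have : c ∈ clSpan s := Submodule.le_topologicalClosure _ hc
      exact Submodule.starProjection_eq_self_iff.2 this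
    have hd' : projS s d = 0 := by
      have : d ∈ (clSpan s)ᗮ := by
        have := Submodule.span_le.2 hts
        exact this hd
      simp [projS, Submodule.orthogonalProjectionOnto_apply_of_mem_orthogonal this]
    show (c + d) - projS s (c + d) ∈ clSpan t
    rw [map_add, hc', hd', add_zero, add_sub_cancel_left]
    exact Submodule.le_topologicalClosure _ hd
  have := map_mem_closure hcont hmem hmaps
  have hcl : IsClosed ((clSpan t : Set H)) := Submodule.isClosed_topologicalClosure _
  rw [hcl.closure_eq] at this
  have hz : projS s a = 0 := by
    simp [projS, Submodule.orthogonalProjectionOnto_apply_of_mem_orthogonal ha']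
  simpa [hz] using this

/-- Codimension-one formula: if `z ∉ clSpan s`, then the orthocomplement of
`clSpan s` has rank one more than its intersection with `(span {z})ᗮ`. -/
lemma rank_inf_orthogonal_singleton {s : Set H} {z : H} (hz : z ∉ clSpan s) :
    Module.rank ℂ ↥((clSpan s)ᗮ ⊓ (Submodule.span ℂ {z})ᗮ) + 1
      = Module.rank ℂ ↥((clSpan s)ᗮ) := by
  set W : Submodule ℂ H := (clSpan s)ᗮ with hW
  haveI : CompleteSpace W := (Submodule.isClosed_orthogonal _).completeSpace_coe
  have hWorth : Wᗮ = clSpan s := by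
    rw [hW, Submodule.orthogonal_orthogonal]
  set w : W := W.orthogonalProjectionOnto z with hw
  have hsub : z - (w : H) ∈ Wᗮ := W.sub_starProjection_mem_orthogonal z
  have hwne : w ≠ 0 := by
    intro h0
    apply hz
    rw [← hWorth]
    simpa [h0] using hsub
  -- the inner products against z and w agree on W
  have hinner : ∀ u : W, (inner ℂ z (u : H) : ℂ) = inner ℂ (w : H) (u : H) := by
    intro u
    have := (Submodule.mem_orthogonal' _ _).1 hsub (u : H) u.2
    rw [inner_sub_left, sub_eq_zero] at this
    exact this
  have hcomap : Submodule.comap W.subtype (W ⊓ (Submodule.span ℂ {z})ᗮ)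
      = (Submodule.span ℂ {w})ᗮ := by
    ext u
    simp only [Submodule.mem_comap, Submodule.mem_inf, Submodule.subtype_apply,
      SetLike.coe_mem, true_and]
    rw [Submodule.mem_orthogonal_singleton_iff_inner_left,
      Submodule.mem_orthogonal_singleton_iff_inner_left]
    rw [← inner_eq_zero_symm, hinner u, ← Submodule.coe_inner]
    exact inner_eq_zero_symm
  have hrank1 : Module.rank ℂ ↥(W ⊓ (Submodule.span ℂ {z})ᗮ)
      = Module.rank ℂ ↥((Submodule.span ℂ {w})ᗮ) := by
    rw [← hcomap]
    exact (Submodule.comapSubtypeEquivOfLe inf_le_left).rank_eq.symm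
  haveI : FiniteDimensional ℂ (Submodule.span ℂ {w}) := by
    apply FiniteDimensional.span_of_finite
    exact Set.finite_singleton w
  haveI : CompleteSpace (Submodule.span ℂ {w}) := FiniteDimensional.complete ℂ _
  have hcompl : IsCompl (Submodule.span ℂ {w}) (Submodule.span ℂ {w})ᗮ :=
    Submodule.isCompl_orthogonal_of_hasOrthogonalProjection
  have hsum := Submodule.rank_sup_add_rank_inf_eq (Submodule.span ℂ {w})
    (Submodule.span ℂ {w})ᗮ
  rw [hcompl.sup_eq_top, hcompl.inf_eq_bot, rank_top, rank_bot, add_zero] at hsum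
  have hspanw : Module.rank ℂ ↥(Submodule.span ℂ {w}) = 1 := by
    have : Module.finrank ℂ ↥(Submodule.span ℂ {w}) = 1 := finrank_span_singleton hwne
    rw [← Module.finrank_eq_rank, this, Nat.cast_one]
  rw [hspanw] at hsum
  rw [hrank1, add_comm]
  exact hsum.symm

/-- Vector replacement: moving one index `k₀` from `N₂` to `N₁` does not change the defect
(the dimension of the orthogonal complement of the closed span of the mixed system). -/
theorem defect_invariant_under_swap
    (x y : ℕ → H) (hbi : IsBiorthogonal x y)
    (N₁ N₂ : Set ℕ) (hdisj : Disjoint N₁ N₂) (hunion : N₁ ∪ N₂ = Set.univ)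
    (k₀ : ℕ) (hk₀ : k₀ ∈ N₂) (m : Cardinal)
    (hm : Module.rank ℂ ↥((clSpan (x '' N₁ ∪ y '' N₂))ᗮ) = m) :
    Module.rank ℂ ↥((clSpan (x '' (N₁ ∪ {k₀}) ∪ y '' (N₂ \ {k₀})))ᗮ) = m := by
  set s₁ : Set H := x '' N₁ with hs₁
  set s₂ : Set H := y '' (N₂ \ {k₀}) with hs₂
  -- basic orthogonality facts
  have hk₀n1 : k₀ ∉ N₁ := fun h => (Set.disjoint_left.1 hdisj h) hk₀
  have hys₁ : ∀ u ∈ s₁, (inner ℂ u (y k₀) : ℂ) = 0 := by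
    rintro u ⟨j, hj, rfl⟩
    rw [hbi j k₀, if_neg]
    rintro rfl; exact hk₀n1 hj
  have hxs₂ : ∀ u ∈ s₂, (inner ℂ u (x k₀) : ℂ) = 0 := by
    rintro u ⟨i, hi, rfl⟩
    rw [← inner_conj_symm, hbi k₀ i, if_neg, map_zero]
    rintro rfl; exact hi.2 rfl
  have hs₂orth : s₂ ⊆ ((clSpan s₁)ᗮ : Set H) := by
    rintro u ⟨i, hi, rfl⟩
    apply mem_clSpan_orthogonal
    rintro v ⟨j, hj, rfl⟩
    rw [hbi j i, if_neg]
    rintro rfl; exact (Set.disjoint_left.1 hdisj hj) hi.1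
  have hs₁orth : s₁ ⊆ ((clSpan s₂)ᗮ : Set H) := by
    rintro u ⟨j, hj, rfl⟩
    apply mem_clSpan_orthogonal
    rintro v ⟨i, hi, rfl⟩
    rw [← inner_conj_symm, hbi j i, if_neg, map_zero]
    rintro rfl; exact (Set.disjoint_left.1 hdisj hj) hi.1
  have hyk : y k₀ ∈ (clSpan s₁)ᗮ := mem_clSpan_orthogonal hys₁
  have hxk : x k₀ ∈ (clSpan s₂)ᗮ := mem_clSpan_orthogonal hxs₂
  have hone : (inner ℂ (x k₀) (y k₀) : ℂ) = 1 := by rw [hbi k₀ k₀, if_pos rfl]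
  -- neither x k₀ nor y k₀ lies in A = clSpan (s₁ ∪ s₂)
  have hynA : y k₀ ∉ clSpan (s₁ ∪ s₂) := by
    intro hmem
    have : y k₀ ∈ clSpan s₂ := mem_clSpan_right hs₂orth hmem hyk
    have h0 := (Submodule.mem_orthogonal _ _).1 hxk (y k₀) this
    rw [← inner_conj_symm, hone, map_one] at h0
    exact one_ne_zero h0
  have hxnA : x k₀ ∉ clSpan (s₁ ∪ s₂) := by
    intro hmem
    rw [Set.union_comm] at hmem
    have : x k₀ ∈ clSpan s₁ := mem_clSpan_right hs₁orth hmem hxk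
    have h0 := (Submodule.mem_orthogonal _ _).1 hyk (x k₀) this
    rw [hone] at h0
    exact one_ne_zero h0
  -- rewrite both generator sets
  have hy_set : x '' N₁ ∪ y '' N₂ = (s₁ ∪ s₂) ∪ {y k₀} := by
    have : N₂ = (N₂ \ {k₀}) ∪ {k₀} := by
      rw [Set.diff_union_of_subset (Set.singleton_subset_iff.2 hk₀)]
    rw [this, Set.image_union, Set.image_singleton, hs₁, hs₂, Set.union_assoc]
  have hx_set : x '' (N₁ ∪ {k₀}) ∪ y '' (N₂ \ {k₀}) = (s₁ ∪ s₂) ∪ {x k₀} := by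
    rw [Set.image_union, Set.image_singleton, hs₁, hs₂]
    rw [Set.union_assoc, Set.union_comm {x k₀} s₂, ← Set.union_assoc]
  -- orthocomplement splits
  have horth : ∀ z : H, (clSpan ((s₁ ∪ s₂) ∪ {z}))ᗮ
      = (clSpan (s₁ ∪ s₂))ᗮ ⊓ (Submodule.span ℂ {z})ᗮ := by
    intro z
    rw [clSpan_orthogonal, clSpan_orthogonal, Submodule.span_union,
      Submodule.inf_orthogonal]
  rw [hy_set, horth] at hm
  rw [hx_set, horth]
  have h1 := rank_inf_orthogonal_singleton hynA
  have h2 := rank_inf_orthogonal_singleton hxnA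
  rw [hm] at h1
  rw [← h1] at h2
  exact Cardinal.eq_of_add_eq_add_right h2 Cardinal.one_lt_aleph0
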